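/- Let F be a field and let V be an infinite-dimensional vector space over F. Then for every derivation d of the algebra End_fin(V) of finite-rank endomorphisms of V there exists y ∈ End_F(V) such that d(a) = y∘a − a∘y for all a ∈ End_fin(V). -/

import Mathlib

/-- An endomorphism has finite rank, i.e. finite-dimensional range. -/
def FinRank {F V : Type*} [Field F] [AddCommGroup V] [Module F V]
    (a : Module.End F V) : Prop :=
  Module.Finite F (LinearMap.range a)

/-- For an infinite-dimensional vector space `V` over a field `F`, every
derivation `d` of the algebra `End_fin(V)` of finite-rank endomorphisms is of the form
`d(a) = y ∘ a - a ∘ y` for some `y ∈ End_F(V)`. -/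
theorem stmt_5 (F V : Type*) [Field F] [AddCommGroup V] [Module F V]
    (hV : ¬ Module.Finite F V)
    (d : Module.End F V → Module.End F V)
    (hmap : ∀ a, FinRank a → FinRank (d a))
    (hadd : ∀ a b, FinRank a → FinRank b → d (a + b) = d a + d b)
    (hsmul : ∀ (c : F) (a), FinRank a → d (c • a) = c • d a)
    (hmul : ∀ a b, FinRank a → FinRank b → d (a * b) = d a * b + a * d b) :
    ∃ y : Module.End F V, ∀ a, FinRank a → d a = y * a - a * y := by
  -- V is nonzero
  have hv : ∃ v : V, v ≠ 0 := by
    by_contra h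
    push_neg at h
    haveI : Subsingleton V := ⟨fun a b => by rw [h a, h b]⟩
    exact hV inferInstance
  obtain ⟨v₀, hv₀⟩ := hv
  -- a functional f with f v₀ = 1
  obtain ⟨f, hf⟩ := (LinearMap.toSpanSingleton F V v₀).exists_leftInverse_of_injective
    (LinearMap.ker_toSpanSingleton F hv₀)
  have hfv₀ : f v₀ = 1 := by
    have := congrArg (fun g => g (1 : F)) hf
    simpa [LinearMap.toSpanSingleton] using this
  -- rank-one operators a_x = x ⊗ f
  let A : V → Module.End F V := fun x => (LinearMap.toSpanSingleton F V x).comp f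
  have hAapp : ∀ x w, A x w = f w • x := fun x w => rfl
  have hAv₀ : ∀ x, A x v₀ = x := fun x => by simp [hAapp, hfv₀]
  have hAfin : ∀ x, FinRank (A x) := by
    intro x
    have hle : LinearMap.range (A x) ≤ Submodule.span F {x} := by
      rintro _ ⟨w, rfl⟩
      exact Submodule.smul_mem _ _ (Submodule.mem_span_singleton_self x)
    have : FiniteDimensional F (Submodule.span F {x}) := inferInstance
    exact Submodule.finiteDimensional_of_le hle
  have hAmul : ∀ (a : Module.End F V) (x : V), a * A x = A (a x) := by
    intro a x
    ext w
    simp only [Module.End.mul_apply, hAapp, map_smul]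
  have hAadd : ∀ x x', A (x + x') = A x + A x' := by
    intro x x'; ext w; simp [hAapp, smul_add]
  have hAsmul : ∀ (c : F) x, A (c • x) = c • A x := by
    intro c x; ext w
    rw [hAapp, LinearMap.smul_apply, hAapp, smul_comm]
  -- define y
  let y : Module.End F V :=
    { toFun := fun x => d (A x) v₀
      map_add' := fun x x' => by
        show d (A (x + x')) v₀ = d (A x) v₀ + d (A x') v₀
        rw [hAadd, hadd _ _ (hAfin x) (hAfin x'), LinearMap.add_apply]
      map_smul' := fun c x => by
        show d (A (c • x)) v₀ = c • d (A x) v₀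
        rw [hAsmul, hsmul c _ (hAfin x), LinearMap.smul_apply] }
  refine ⟨y, fun a ha => ?_⟩
  ext x
  have key := hmul a (A x) ha (hAfin x)
  rw [hAmul a x] at key
  have := congrArg (fun g : Module.End F V => g v₀) key
  simp only [LinearMap.add_apply, Module.End.mul_apply, hAv₀] at this
  have hyx : y x = d (A x) v₀ := rfl
  have hyax : y (a x) = d (A (a x)) v₀ := rfl
  simp only [LinearMap.sub_apply, Module.End.mul_apply, hyx, hyax, this]
  abel
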